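/- For every r with 0 < r ≤ v_ref, the set {−φ(s)/s : s ∈ [−r, r], s ≠ 0} is nonempty and bounded above, and its supremum λ_min(r) satisfies λ_min(r) ≥ −Γ > 0. -/
import Mathlib

open Real Filter Set

/-- The friction nonlinearity `F_nl`. -/
noncomputable def Fnl (m g vs muC muS : ℝ) (v : ℝ) : ℝ :=
  m * g * (muC + (muS - muC) * Real.exp (-(v ^ 2) / vs ^ 2)) * Real.sign v

theorem stmt9 (m g vs muC muS vref : ℝ)
    (hm : 0 < m) (hg : 0 < g) (hvs : 0 < vs) (hmuC : 0 < muC) (hmu : muC < muS)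
    (hvref : 0 < vref)
    (phi : ℝ → ℝ) (hphi : ∀ s, phi s = Fnl m g vs muC muS (s + vref) - Fnl m g vs muC muS vref)
    (Γ : ℝ)
    (hΓ : Γ = -2 * m * g * (muS - muC) * (vref / vs ^ 2) * Real.exp (-(vref ^ 2) / vs ^ 2))
    (r : ℝ) (hr : 0 < r) (hrv : r ≤ vref) :
    {y : ℝ | ∃ s ∈ Set.Icc (-r) r, s ≠ 0 ∧ y = -phi s / s}.Nonempty ∧
    BddAbove {y : ℝ | ∃ s ∈ Set.Icc (-r) r, s ≠ 0 ∧ y = -phi s / s} ∧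
    sSup {y : ℝ | ∃ s ∈ Set.Icc (-r) r, s ≠ 0 ∧ y = -phi s / s} ≥ -Γ ∧ 0 < -Γ := by
  have hmu' : 0 < muS - muC := sub_pos.mpr hmu
  set S := {y : ℝ | ∃ s ∈ Set.Icc (-r) r, s ≠ 0 ∧ y = -phi s / s} with hS
  set A := m * g * (muS - muC) with hA
  have hApos : 0 < A := by positivity
  set E : ℝ → ℝ := fun x => Real.exp (-(x ^ 2) / vs ^ 2) with hE
  set C : ℝ := 4 * vref / vs ^ 2 with hC
  have hCpos : 0 < C := by positivity
  -- derivative of E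
  have hEd : ∀ x : ℝ, HasDerivAt E (E x * (-(2 * x) / vs ^ 2)) x := by
    intro x
    have h1 : HasDerivAt (fun x : ℝ => -(x ^ 2) / vs ^ 2) (-(2 * x) / vs ^ 2) x := by
      have := ((hasDerivAt_pow 2 x).neg.div_const (vs ^ 2))
      simpa [mul_comm] using this
    simpa [hE] using h1.exp
  -- formula for phi for s + vref > 0
  have hphi' : ∀ s : ℝ, 0 < s + vref → phi s = A * (E (s + vref) - E vref) := by
    intro s hs
    rw [hphi, Fnl, Fnl, Real.sign_of_pos hs, Real.sign_of_pos hvref]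
    simp only [hE, hA]
    ring
  -- E values in [0,1]
  have hE1 : ∀ x : ℝ, E x ≤ 1 := by
    intro x
    simp only [hE]
    apply Real.exp_le_one_iff.mpr
    exact div_nonpos_of_nonpos_of_nonneg (neg_nonpos.mpr (sq_nonneg x)) (sq_nonneg vs)
  have hE0 : ∀ x : ℝ, 0 < E x := fun x => Real.exp_pos _
  -- Lipschitz estimate on [0, 2*vref]
  have hLip : ∀ x ∈ Set.Icc (0:ℝ) (2 * vref), ∀ y ∈ Set.Icc (0:ℝ) (2 * vref),
      |E y - E x| ≤ C * |y - x| := by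
    intro x hx y hy
    have := Convex.norm_image_sub_le_of_norm_hasDerivWithin_le
      (f := E) (f' := fun z => E z * (-(2 * z) / vs ^ 2)) (C := C)
      (fun z _ => (hEd z).hasDerivWithinAt) ?_ (convex_Icc _ _) hx hy
    · simpa [Real.norm_eq_abs] using this
    · intro z hz
      rw [Real.norm_eq_abs, abs_mul]
      have h1 : |E z| ≤ 1 := by rw [abs_of_pos (hE0 z)]; exact hE1 z
      have h2 : |(-(2 * z) / vs ^ 2)| ≤ C := by
        rw [abs_div, abs_neg, abs_of_pos (show (0:ℝ) < vs ^ 2 by positivity)]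
        rw [hC]
        apply div_le_div_of_nonneg_right ?_ (by positivity)
        · rw [abs_of_nonneg (by linarith [hz.1])]
          linarith [hz.2]
      calc |E z| * |(-(2 * z) / vs ^ 2)| ≤ 1 * C := by
            apply mul_le_mul h1 h2 (abs_nonneg _) zero_le_one
        _ = C := one_mul C
  -- Bound on elements of S
  have hBound : ∀ y ∈ S, y ≤ A * C := by
    rintro y ⟨s, hsIcc, hs0, rfl⟩
    have hsv : 0 ≤ s + vref := by linarith [hsIcc.1]
    rcases hsv.lt_or_eq with hpos | heq
    · rw [hphi' s hpos]
      have hmem1 : s + vref ∈ Set.Icc (0:ℝ) (2 * vref) :=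
        ⟨le_of_lt hpos, by linarith [hsIcc.2]⟩
      have hmem2 : vref ∈ Set.Icc (0:ℝ) (2 * vref) := ⟨le_of_lt hvref, by linarith⟩
      have hlip := hLip vref hmem2 (s + vref) hmem1
      have hss : |s + vref - vref| = |s| := by ring_nf
      rw [hss] at hlip
      have habs : |(-(A * (E (s + vref) - E vref)) / s)| ≤ A * C := by
        rw [abs_div, abs_neg, abs_mul, abs_of_pos hApos]
        rw [div_le_iff₀ (abs_pos.mpr hs0)]
        calc A * |E (s + vref) - E vref| ≤ A * (C * |s|) :=
              mul_le_mul_of_nonneg_left hlip (le_of_lt hApos)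
          _ = A * C * |s| := by ring
      exact le_trans (le_abs_self _) habs
    · -- s + vref = 0, so s = -vref < 0
      have hs : s = -vref := by linarith
      have hphi0 : phi s = -(m * g * (muC + (muS - muC) * E vref)) := by
        rw [hphi, ← heq, Fnl, Fnl, Real.sign_of_pos hvref, Real.sign_zero]
        simp only [hE]
        ring
      have hnum : 0 < m * g * (muC + (muS - muC) * E vref) := by
        have := hE0 vref; positivity
      rw [hphi0, hs]
      have : -(-(m * g * (muC + (muS - muC) * E vref))) / -vref ≤ 0 := by
        apply div_nonpos_of_nonneg_of_nonpos (by linarith) (by linarith)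
      linarith [mul_pos hApos hCpos]
  have hBdd : BddAbove S := ⟨A * C, hBound⟩
  -- Nonempty
  have hNe : S.Nonempty := ⟨-phi r / r, r, ⟨by linarith, le_refl r⟩, ne_of_gt hr, rfl⟩
  -- Derivative / limit argument
  have hΓeq : Γ = A * (E vref * (-(2 * vref) / vs ^ 2)) := by
    rw [hΓ]; simp only [hE, hA]; ring
  have hh : HasDerivAt (fun s : ℝ => A * E (s + vref)) Γ 0 := by
    have h1 : HasDerivAt (fun s : ℝ => s + vref) 1 0 := (hasDerivAt_id 0).add_const vref
    have h2 := (hEd (0 + vref)).comp 0 h1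
    rw [hΓeq]
    have := h2.const_mul A
    simpa [zero_add, mul_assoc] using this
  have hsub : Set.Ioi (0:ℝ) ⊆ {(0:ℝ)}ᶜ := fun x hx => by
    simp only [Set.mem_compl_iff, Set.mem_singleton_iff]
    exact ne_of_gt hx
  have htend : Tendsto (fun s => -slope (fun t : ℝ => A * E (t + vref)) 0 s)
      (nhdsWithin 0 (Set.Ioi 0)) (nhds (-Γ)) :=
    ((hasDerivAt_iff_tendsto_slope.mp hh).mono_left (nhdsWithin_mono 0 hsub)).neg
  have hev : ∀ᶠ s in nhdsWithin (0:ℝ) (Set.Ioi 0),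
      -slope (fun t : ℝ => A * E (t + vref)) 0 s ≤ sSup S := by
    filter_upwards [Ioo_mem_nhdsGT_of_mem (show (0:ℝ) ∈ Set.Ico 0 r from ⟨le_refl 0, hr⟩)]
      with s hs
    have hs0 : s ≠ 0 := ne_of_gt hs.1
    have hsl : -slope (fun t : ℝ => A * E (t + vref)) 0 s = -phi s / s := by
      rw [slope_def_field, hphi' s (by linarith [hs.1])]
      field_simp
      ring
    rw [hsl]
    exact le_csSup hBdd ⟨s, ⟨by linarith [hs.1], le_of_lt hs.2⟩, hs0, rfl⟩
  have hSup : -Γ ≤ sSup S := le_of_tendsto htend hev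
  have hΓpos : 0 < -Γ := by
    rw [hΓ]
    have := Real.exp_pos (-(vref ^ 2) / vs ^ 2)
    nlinarith [mul_pos (mul_pos (mul_pos hm hg) hmu') (div_pos hvref (show (0:ℝ) < vs^2 by positivity))]
  exact ⟨hNe, hBdd, hSup, hΓpos⟩
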